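/- Let k ≥ 2 and σ_i = i(k−i)/2. For every η ∈ (0, 1/5] and A ≥ 0, the compact set K = ∏_{i=2}^{k} [−σ_{i−1} + η, A] ⊂ ℝ^{k−1} is stable under the flow of system (B): if b = (b_2,…,b_k) : [0,T) → ℝ^{k−1} is a C¹ solution of (B) with b_i(0) ∈ [−σ_{i−1} + η, A] for every i = 2,…,k, then b_i(τ) ∈ [−σ_{i−1} + η, A] for every τ ∈ [0,T) and every i = 2,…,k. In particular, any maximal solution of (B) with initial data in K is global (defined on [0,∞)). -/

import Mathlib

open Set Filter Topology Real

/-- `σᵢ = i(k-i)/2` (so that `σ₀ = σ_k = 0`). -/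
noncomputable def sig (k i : ℕ) : ℝ := (i : ℝ) * ((k : ℝ) - (i : ℝ)) / 2

lemma sig_nonneg {k i : ℕ} (h : i ≤ k) : 0 ≤ sig k i := by
  have h1 : (i:ℝ) ≤ (k:ℝ) := by exact_mod_cast h
  have h2 : (0:ℝ) ≤ i := by positivity
  unfold sig; nlinarith

lemma sig_le_sq {k i : ℕ} (h : i ≤ k) : sig k i ≤ (k:ℝ) * k := by
  have h1 : (i:ℝ) ≤ (k:ℝ) := by exact_mod_cast h
  have h2 : (0:ℝ) ≤ i := by positivity
  unfold sig; nlinarith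

lemma sig_zero (k : ℕ) : sig k 0 = 0 := by simp [sig]

lemma sig_self (k : ℕ) : sig k k = 0 := by simp [sig]

lemma sig_key {k i : ℕ} (h2 : 2 ≤ i) (hik : i ≤ k) :
    sig k (i - 2) + sig k i = 2 * sig k (i - 1) - 1 := by
  unfold sig
  rw [Nat.cast_sub (by omega : 2 ≤ i), Nat.cast_sub (by omega : 1 ≤ i)]
  push_cast
  ring

/-- clamp to `[-M, M]` -/
noncomputable def cl (M u : ℝ) : ℝ := max (-M) (min M u)

lemma cl_eq_self {M u : ℝ} (h : |u| ≤ M) : cl M u = u := by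
  rw [abs_le] at h
  unfold cl
  rw [min_eq_right h.2, max_eq_right h.1]

lemma abs_cl_le {M u : ℝ} (hM : 0 ≤ M) : |cl M u| ≤ M := by
  rw [abs_le]
  constructor
  · exact le_max_left _ _
  · exact max_le (by linarith) (min_le_left _ _)

lemma cl_lipschitz (M u v : ℝ) : |cl M u - cl M v| ≤ |u - v| := by
  unfold cl
  rw [max_comm (-M) (min M u), max_comm (-M) (min M v)]
  refine le_trans (abs_max_sub_max_le_abs _ _ _) ?_
  rw [min_comm M u, min_comm M v]
  rcases le_total u M with h | h <;> rcases le_total v M with h' | h' <;>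
    simp [min_eq_left, min_eq_right, *] <;> rw [abs_le] <;>
    constructor <;>
    nlinarith [abs_nonneg (u-v), le_abs_self (u-v), neg_abs_le (u-v)]

lemma eventually_ge_of_derivPos {g : ℝ → ℝ} {t d : ℝ} (hg : HasDerivAt g d t) (h0 : g t = 0)
    (hd : 0 < d) : ∀ᶠ u in 𝓝[>] t, 0 ≤ g u := by
  have hslope := hasDerivAt_iff_tendsto_slope.mp hg
  have h1 : ∀ᶠ u in 𝓝[≠] t, 0 < slope g t u := hslope.eventually (eventually_gt_nhds hd)
  have h2 : 𝓝[>] t ≤ 𝓝[≠] t := nhdsWithin_mono t fun u hu => ne_of_gt hu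
  filter_upwards [h1.filter_mono h2, self_mem_nhdsWithin] with u hu hut
  rw [slope_def_field, div_eq_mul_inv] at hu
  have h3 : (0:ℝ) < u - t := sub_pos.mpr hut
  nlinarith [mul_pos hu h3, inv_pos.mpr h3]

lemma eventually_ge_aux {g : ℝ → ℝ} {t d : ℝ} (hg : HasDerivAt g d t) (h0 : 0 ≤ g t)
    (hd : g t = 0 → 0 < d) : ∀ᶠ u in 𝓝[>] t, 0 ≤ g u := by
  rcases eq_or_lt_of_le h0 with h | h
  · exact eventually_ge_of_derivPos hg h.symm (hd h.symm)
  · have h1 : ∀ᶠ u in 𝓝 t, 0 < g u := hg.continuousAt (Ioi_mem_nhds h)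
    exact (h1.filter_mono nhdsWithin_le_nhds).mono fun u hu => hu.le

lemma invariance (k : ℕ) (hk : 2 ≤ k) (η A : ℝ) (hη₀ : 0 < η) (hη₁ : η ≤ 1 / 5) (hA : 0 ≤ A)
    (T : ℝ) (b d : ℕ → ℝ → ℝ)
    (hb1 : ∀ τ, b 1 τ = 0) (hbk : ∀ τ, b (k + 1) τ = 0)
    (hder : ∀ i, 2 ≤ i → i ≤ k → ∀ τ ∈ Set.Ico 0 T, HasDerivAt (b i) (d i τ) τ)
    (hd : ∀ i, 2 ≤ i → i ≤ k → ∀ τ ∈ Set.Ico 0 T,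
      (∀ m, 1 ≤ m → m ≤ k + 1 → -sig k (m - 1) ≤ b m τ ∧ b m τ ≤ A + 1) →
      d i τ = (b i τ + sig k (i - 1)) * (b (i - 1) τ - 2 * b i τ + b (i + 1) τ))
    (h0 : ∀ i, 2 ≤ i → i ≤ k → b i 0 ∈ Set.Icc (-sig k (i - 1) + η) A) :
    ∀ τ ∈ Set.Ico 0 T, ∀ i, 2 ≤ i → i ≤ k → b i τ ∈ Set.Icc (-sig k (i - 1) + η) A := by
  have main : ∀ τ₀ ∈ Set.Ico (0:ℝ) T, ∀ ε : ℝ, 0 < ε → ε * Real.exp τ₀ ≤ 1 →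
      ∀ t ∈ Set.Icc 0 τ₀, ∀ i, 2 ≤ i → i ≤ k →
        -sig k (i-1) + η ≤ b i t ∧ b i t ≤ A + ε * Real.exp t := by
    rintro τ₀ ⟨hτ₀0, hτ₀T⟩ ε hε hε1
    by_contra hcon
    push_neg at hcon
    set W : Set ℝ := {t | t ∈ Set.Icc 0 τ₀ ∧
      ¬ ∀ i, 2 ≤ i → i ≤ k → -sig k (i-1) + η ≤ b i t ∧ b i t ≤ A + ε * Real.exp t} with hWdef
    have hWne : W.Nonempty := by
      obtain ⟨t₁, ht₁, i, h2, hik, hni⟩ := hcon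
      exact ⟨t₁, ht₁, fun hall =>
        absurd (hall i h2 hik).2 (not_le.mpr (hni (hall i h2 hik).1))⟩
    have hWbdd : BddBelow W := ⟨0, fun t ht => ht.1.1⟩
    set s := sInf W with hsdef
    have hs0 : 0 ≤ s := le_csInf hWne fun t ht => ht.1.1
    have hsτ₀ : s ≤ τ₀ := by
      obtain ⟨t₁, ht₁⟩ := hWne
      exact (csInf_le hWbdd ht₁).trans ht₁.1.2
    have hsT : s < T := lt_of_le_of_lt hsτ₀ hτ₀T
    have hsIco : s ∈ Set.Ico (0:ℝ) T := ⟨hs0, hsT⟩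
    have hQlt : ∀ t, 0 ≤ t → t < s →
        ∀ i, 2 ≤ i → i ≤ k → -sig k (i-1) + η ≤ b i t ∧ b i t ≤ A + ε * Real.exp t := by
      intro t ht0 hts
      by_contra hn
      exact absurd (csInf_le hWbdd ⟨⟨ht0, hts.le.trans hsτ₀⟩, hn⟩) (not_le.mpr hts)
    have hQs : ∀ i, 2 ≤ i → i ≤ k →
        -sig k (i-1) + η ≤ b i s ∧ b i s ≤ A + ε * Real.exp s := by
      rcases eq_or_lt_of_le hs0 with h0s | h0s
      · rw [h0s.symm]
        intro i h2 hik
        obtain ⟨hl, hu⟩ := h0 i h2 hik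
        refine ⟨hl, ?_⟩
        have he : Real.exp 0 = 1 := Real.exp_zero
        nlinarith
      · intro i h2 hik
        have hcont : ContinuousAt (b i) s := (hder i h2 hik s hsIco).continuousAt
        have hev : ∀ᶠ t in 𝓝[<] s,
            -sig k (i-1) + η ≤ b i t ∧ b i t ≤ A + ε * Real.exp t := by
          filter_upwards [Ioo_mem_nhdsLT h0s] with t ht
          exact hQlt t ht.1.le ht.2 i h2 hik
        constructor
        · exact ge_of_tendsto (hcont.continuousWithinAt :
            Filter.Tendsto (b i) (𝓝[<] s) (𝓝 (b i s))) (hev.mono fun t ht => ht.1)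
        · have hgc : ContinuousAt (fun t => A + ε * Real.exp t - b i t) s := by
            exact (continuousAt_const.add (continuousAt_const.mul
              Real.continuous_exp.continuousAt)).sub hcont
          have hev2 : ∀ᶠ t in 𝓝[<] s, (0:ℝ) ≤ A + ε * Real.exp t - b i t :=
            hev.mono fun t ht => by linarith [ht.2]
          have := ge_of_tendsto (hgc.continuousWithinAt :
            Filter.Tendsto (fun t => A + ε * Real.exp t - b i t) (𝓝[<] s)
              (𝓝 (A + ε * Real.exp s - b i s))) hev2
          have h3 : (0:ℝ) ≤ A + ε * Real.exp s - b i s := this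
          linarith
    have hexp_pos := Real.exp_pos s
    have hAε : 0 ≤ A + ε * Real.exp s := by positivity
    have hnb : ∀ m, 1 ≤ m → m ≤ k+1 →
        -sig k (m-1) ≤ b m s ∧ b m s ≤ A + ε * Real.exp s := by
      intro m h1 hm
      rcases eq_or_lt_of_le h1 with h | h
      · rw [← h]
        simp only [Nat.sub_self, sig_zero]
        rw [hb1 s]
        exact ⟨by norm_num, hAε⟩
      · rcases eq_or_lt_of_le hm with h' | h'
        · rw [h']
          have : k + 1 - 1 = k := by omega
          rw [this, sig_self, hbk s]
          exact ⟨by norm_num, hAε⟩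
        · obtain ⟨hl, hu⟩ := hQs m (by omega) (by omega)
          exact ⟨by linarith, hu⟩
    have hbox : ∀ m, 1 ≤ m → m ≤ k+1 → -sig k (m-1) ≤ b m s ∧ b m s ≤ A + 1 := by
      intro m h1 hm
      obtain ⟨hl, hu⟩ := hnb m h1 hm
      have hse : Real.exp s ≤ Real.exp τ₀ := Real.exp_le_exp.mpr hsτ₀
      refine ⟨hl, hu.trans ?_⟩
      nlinarith
    have hev : ∀ᶠ t in 𝓝[>] s, ∀ i ∈ Finset.Icc 2 k,
        -sig k (i-1) + η ≤ b i t ∧ b i t ≤ A + ε * Real.exp t := by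
      rw [Filter.eventually_all_finset]
      intro i hi
      rw [Finset.mem_Icc] at hi
      obtain ⟨h2, hik⟩ := hi
      have hdi := hder i h2 hik s hsIco
      have hdval : d i s =
          (b i s + sig k (i-1)) * (b (i-1) s - 2 * b i s + b (i+1) s) :=
        hd i h2 hik s hsIco hbox
      have hsig_nonneg : 0 ≤ sig k (i-1) := sig_nonneg (by omega)
      have hQi := hQs i h2 hik
      have hlow : ∀ᶠ t in 𝓝[>] s, 0 ≤ b i t - (-sig k (i-1) + η) := by
        apply eventually_ge_aux (hdi.sub_const _)
        · simp only [sub_nonneg]; exact hQi.1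
        · intro hcontact
          have hbis : b i s = -sig k (i-1) + η := by linarith [sub_eq_zero.mp hcontact]
          have h1 := (hnb (i-1) (by omega) (by omega)).1
          have h2' := (hnb (i+1) (by omega) (by omega)).1
          have hkey := sig_key h2 hik
          rw [show i - 1 - 1 = i - 2 from by omega] at h1
          rw [show i + 1 - 1 = i from by omega] at h2'
          rw [hdval, hbis]
          have hfac : -sig k (i-1) + η + sig k (i-1) = η := by ring
          rw [hfac]
          have hD : 1 - 2*η ≤ b (i-1) s - 2 * (-sig k (i-1) + η) + b (i+1) s := by
            linarith
          nlinarith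
      have hupp : ∀ᶠ t in 𝓝[>] s, 0 ≤ A + ε * Real.exp t - b i t := by
        have hgd : HasDerivAt (fun t => A + ε * Real.exp t - b i t)
            (ε * Real.exp s - d i s) s := by
          have h1 : HasDerivAt (fun t => A + ε * Real.exp t) (ε * Real.exp s) s := by
            exact ((Real.hasDerivAt_exp s).const_mul ε).const_add A
          exact h1.sub hdi
        apply eventually_ge_aux hgd
        · simp only [sub_nonneg]; exact hQi.2
        · intro hcontact
          have hbis : b i s = A + ε * Real.exp s := by
            have := sub_eq_zero.mp hcontact; linarith
          have h1 := (hnb (i-1) (by omega) (by omega)).2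
          have h2' := (hnb (i+1) (by omega) (by omega)).2
          have hDle : b (i-1) s - 2 * b i s + b (i+1) s ≤ 0 := by linarith
          have hfac : 0 ≤ b i s + sig k (i-1) := by nlinarith
          have hdle : d i s ≤ 0 := by rw [hdval]; exact mul_nonpos_of_nonneg_of_nonpos hfac hDle
          nlinarith
      filter_upwards [hlow, hupp] with t h1 h2''
      exact ⟨by linarith, by linarith⟩
    obtain ⟨u, hu, hIoo⟩ := mem_nhdsGT_iff_exists_Ioo_subset.mp hev
    obtain ⟨w, hwW, hwu⟩ := exists_lt_of_csInf_lt hWne (show sInf W < u from hu)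
    have hws : s ≤ w := csInf_le hWbdd hwW
    rcases eq_or_lt_of_le hws with heq | hlt
    · exact hwW.2 (heq ▸ hQs)
    · exact hwW.2 fun i h2 hik => hIoo ⟨hlt, hwu⟩ i (Finset.mem_Icc.mpr ⟨h2, hik⟩)
  intro τ hτ i h2 hik
  have hepos : 0 < Real.exp (-τ) := Real.exp_pos _
  have hmain1 := main τ hτ (Real.exp (-τ)) hepos
    (by rw [← Real.exp_add]; simp) τ ⟨hτ.1, le_refl τ⟩ i h2 hik
  constructor
  · exact hmain1.1
  · refine le_of_forall_pos_le_add ?_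
    intro δ hδ
    have hδ1 : 0 < min δ 1 := lt_min hδ one_pos
    set ε := min δ 1 * Real.exp (-τ) with hεdef
    have hε : 0 < ε := by positivity
    have hεexp : ε * Real.exp τ = min δ 1 := by
      rw [hεdef, mul_assoc, ← Real.exp_add]; simp
    have h := (main τ hτ ε hε (by rw [hεexp]; exact min_le_right _ _)
      τ ⟨hτ.1, le_refl τ⟩ i h2 hik).2
    rw [hεexp] at h
    have : min δ 1 ≤ δ := min_le_left _ _
    linarith

noncomputable def vfc (k : ℕ) (M' : ℝ) (x : Fin (k+2) → ℝ) : Fin (k+2) → ℝ := fun j =>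
  if h : 2 ≤ (j:ℕ) ∧ (j:ℕ) ≤ k then
    (cl M' (x j) + sig k ((j:ℕ) - 1)) *
      (cl M' (x ⟨(j:ℕ) - 1, by omega⟩) - 2 * cl M' (x j) + cl M' (x ⟨(j:ℕ) + 1, by omega⟩))
  else 0

lemma prod_bound {M' S D a0 a1 a2 b0 b1 b2 σ : ℝ} (hM' : 0 ≤ M') (hD : 0 ≤ D)
    (ha0 : |a0| ≤ M') (ha1 : |a1| ≤ M') (ha2 : |a2| ≤ M') (hb1 : |b1| ≤ M')
    (h0 : |a0 - b0| ≤ D) (h1 : |a1 - b1| ≤ D) (h2 : |a2 - b2| ≤ D)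
    (hσ0 : 0 ≤ σ) (hσ : σ ≤ S) :
    |(a1 + σ) * (a0 - 2*a1 + a2) - (b1 + σ) * (b0 - 2*b1 + b2)| ≤ (8*M' + 4*S) * D := by
  obtain ⟨l0, u0⟩ := abs_le.mp ha0
  obtain ⟨l1, u1⟩ := abs_le.mp ha1
  obtain ⟨l2, u2⟩ := abs_le.mp ha2
  obtain ⟨lb1, ub1⟩ := abs_le.mp hb1
  obtain ⟨e0l, e0u⟩ := abs_le.mp h0
  obtain ⟨e1l, e1u⟩ := abs_le.mp h1
  obtain ⟨e2l, e2u⟩ := abs_le.mp h2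
  have hA4 : |a0 - 2*a1 + a2| ≤ 4*M' := abs_le.mpr ⟨by linarith, by linarith⟩
  have hB4 : |(a0-b0) - 2*(a1-b1) + (a2-b2)| ≤ 4*D := abs_le.mpr ⟨by linarith, by linarith⟩
  have hb1σ : |b1 + σ| ≤ M' + S := abs_le.mpr ⟨by linarith, by linarith⟩
  have key : (a1 + σ) * (a0 - 2*a1 + a2) - (b1 + σ) * (b0 - 2*b1 + b2)
      = (a1 - b1) * (a0 - 2*a1 + a2)
        + (b1 + σ) * ((a0-b0) - 2*(a1-b1) + (a2-b2)) := by ring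
  rw [key]
  calc |(a1 - b1) * (a0 - 2*a1 + a2) + (b1 + σ) * ((a0-b0) - 2*(a1-b1) + (a2-b2))|
      ≤ |(a1 - b1) * (a0 - 2*a1 + a2)| + |(b1 + σ) * ((a0-b0) - 2*(a1-b1) + (a2-b2))| :=
        abs_add_le _ _
    _ = |a1 - b1| * |a0 - 2*a1 + a2| + |b1 + σ| * |(a0-b0) - 2*(a1-b1) + (a2-b2)| := by
        rw [abs_mul, abs_mul]
    _ ≤ D * (4*M') + (M' + S) * (4*D) :=
        add_le_add (mul_le_mul h1 hA4 (abs_nonneg _) hD)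
          (mul_le_mul hb1σ hB4 (abs_nonneg _) (by linarith))
    _ = (8*M' + 4*S) * D := by ring

lemma vfc_lipschitz (k : ℕ) (M' : ℝ) (hM' : 0 ≤ M') :
    LipschitzWith (Real.toNNReal (8*M' + 4*((k:ℝ)*k))) (vfc k M') := by
  apply LipschitzWith.of_dist_le_mul
  intro x y
  rw [Real.coe_toNNReal _ (by positivity)]
  have hd0 : (0:ℝ) ≤ dist x y := dist_nonneg
  rw [dist_pi_le_iff (by positivity)]
  intro j
  rw [Real.dist_eq]
  by_cases h : 2 ≤ (j:ℕ) ∧ (j:ℕ) ≤ k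
  · simp only [vfc, dif_pos h]
    have hcomp : ∀ m : Fin (k+2), |cl M' (x m) - cl M' (y m)| ≤ dist x y := by
      intro m
      refine (cl_lipschitz _ _ _).trans ?_
      rw [← Real.dist_eq]
      exact dist_le_pi_dist x y m
    exact prod_bound hM' hd0 (abs_cl_le hM') (abs_cl_le hM') (abs_cl_le hM') (abs_cl_le hM')
      (hcomp _) (hcomp _) (hcomp _) (sig_nonneg (by omega)) (sig_le_sq (by omega))
  · simp only [vfc, dif_neg h, sub_self, abs_zero]
    positivity

lemma vfc_bound (k : ℕ) (M' : ℝ) (hM' : 0 ≤ M') (x : Fin (k+2) → ℝ) :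
    ‖vfc k M' x‖ ≤ (M' + (k:ℝ)*k) * (4*M') := by
  rw [pi_norm_le_iff_of_nonneg (by positivity)]
  intro j
  rw [Real.norm_eq_abs]
  by_cases h : 2 ≤ (j:ℕ) ∧ (j:ℕ) ≤ k
  · simp only [vfc, dif_pos h]
    rw [abs_mul]
    have h1 : |cl M' (x j) + sig k ((j:ℕ) - 1)| ≤ M' + (k:ℝ)*k := by
      obtain ⟨l, u⟩ := abs_le.mp (abs_cl_le (u := x j) hM')
      have := sig_nonneg (k := k) (i := (j:ℕ) - 1) (by omega)
      have := sig_le_sq (k := k) (i := (j:ℕ) - 1) (by omega)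
      exact abs_le.mpr ⟨by linarith, by linarith⟩
    have h2 : |cl M' (x ⟨(j:ℕ) - 1, by omega⟩) - 2 * cl M' (x j)
        + cl M' (x ⟨(j:ℕ) + 1, by omega⟩)| ≤ 4*M' := by
      obtain ⟨l0, u0⟩ := abs_le.mp (abs_cl_le (u := x ⟨(j:ℕ) - 1, by omega⟩) hM')
      obtain ⟨l1, u1⟩ := abs_le.mp (abs_cl_le (u := x j) hM')
      obtain ⟨l2, u2⟩ := abs_le.mp (abs_cl_le (u := x ⟨(j:ℕ) + 1, by omega⟩) hM')
      exact abs_le.mpr ⟨by linarith, by linarith⟩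
    exact mul_le_mul h1 h2 (abs_nonneg _) (by positivity)
  · simp only [vfc, dif_neg h, abs_zero]
    positivity

noncomputable def BvFun (k : ℕ) (b : ℕ → ℝ → ℝ) : ℝ → (Fin (k+2) → ℝ) :=
  fun τ j => if 2 ≤ (j:ℕ) ∧ (j:ℕ) ≤ k then b (j:ℕ) τ else 0

/-- System (B): `bᵢ' = (bᵢ + σᵢ₋₁)(bᵢ₋₁ - 2bᵢ + bᵢ₊₁)` for `i = 2,…,k`,
with the conventions `b₁ ≡ 0` and `b_{k+1} ≡ 0`, on the set `S`. -/
def SolvesB (k : ℕ) (b : ℕ → ℝ → ℝ) (S : Set ℝ) : Prop :=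
  (∀ τ, b 1 τ = 0) ∧ (∀ τ, b (k + 1) τ = 0) ∧
  ∀ i, 2 ≤ i → i ≤ k → ∀ τ ∈ S, HasDerivAt (b i)
    ((b i τ + sig k (i - 1)) * (b (i - 1) τ - 2 * b i τ + b (i + 1) τ)) τ
lemma extend (k : ℕ) (hk : 2 ≤ k) (η A : ℝ) (hη₀ : 0 < η) (hη₁ : η ≤ 1 / 5) (hA : 0 ≤ A)
    (T : ℝ) (hT : 0 < T) (b : ℕ → ℝ → ℝ) (hb : SolvesB k b (Set.Ico 0 T))
    (h0 : ∀ i, 2 ≤ i → i ≤ k → b i 0 ∈ Set.Icc (-sig k (i - 1) + η) A) :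
    ∃ T' > T, ∃ b' : ℕ → ℝ → ℝ, SolvesB k b' (Set.Ico 0 T') ∧
      ∀ i, ∀ τ ∈ Set.Ico (0:ℝ) T, b' i τ = b i τ := by
  obtain ⟨hb1, hbk1, hbd⟩ := hb
  have hbox_b : ∀ τ ∈ Set.Ico 0 T, ∀ i, 2 ≤ i → i ≤ k →
      b i τ ∈ Set.Icc (-sig k (i-1) + η) A :=
    invariance k hk η A hη₀ hη₁ hA T b
      (fun i τ => (b i τ + sig k (i-1)) * (b (i-1) τ - 2 * b i τ + b (i+1) τ))
      hb1 hbk1 hbd (fun i _ _ τ _ _ => rfl) h0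
  set M' : ℝ := A + (k:ℝ)*k + 1 with hM'def
  have hM'0 : (0:ℝ) ≤ M' := by positivity
  have habs : ∀ m : ℕ, 1 ≤ m → m ≤ k+1 → ∀ u : ℝ, -sig k (m-1) ≤ u → u ≤ A + 1 →
      |u| ≤ M' := by
    intro m h1 hm u hl hu
    have h1' : 0 ≤ sig k (m-1) := sig_nonneg (by omega)
    have h2' : sig k (m-1) ≤ (k:ℝ)*k := sig_le_sq (by omega)
    rw [abs_le]
    exact ⟨by linarith, by linarith⟩
  have hBvabs : ∀ τ ∈ Set.Ico 0 T, ∀ m : ℕ, 1 ≤ m → m ≤ k+1 → |b m τ| ≤ M' := by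
    intro τ hτ m h1 hm
    by_cases h : 2 ≤ m ∧ m ≤ k
    · obtain ⟨hl, hu⟩ := hbox_b τ hτ m h.1 h.2
      exact habs m h1 hm _ (by linarith) (by linarith)
    · have hz : b m τ = 0 := by
        rcases (by omega : m = 1 ∨ m = k + 1) with h' | h'
        · rw [h']; exact hb1 τ
        · rw [h']; exact hbk1 τ
      rw [hz]; simpa using hM'0
  have hBvcomp : ∀ (τ : ℝ) (m : ℕ), 1 ≤ m → m ≤ k+1 → ∀ (hm : m < k+2),
      BvFun k b τ ⟨m, hm⟩ = b m τ := by
    intro τ m h1 h2 hm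
    by_cases h : 2 ≤ m ∧ m ≤ k
    · simp only [BvFun, Fin.val_mk, if_pos h]
    · simp only [BvFun, Fin.val_mk, if_neg h]
      rcases (by omega : m = 1 ∨ m = k + 1) with h' | h'
      · rw [h', hb1 τ]
      · rw [h', hbk1 τ]
  -- constants
  set C : ℝ := (M' + (k:ℝ)*k) * (4*M') with hCdef
  have hC0 : (0:ℝ) ≤ C := by positivity
  set K : NNReal := Real.toNNReal (8*M' + 4*((k:ℝ)*k)) with hKdef
  have hlip : LipschitzWith K (vfc k M') := vfc_lipschitz k M' hM'0
  set t₀ : ℝ := max 0 (T - 1/2) with ht₀def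
  have ht₀0 : (0:ℝ) ≤ t₀ := le_max_left _ _
  have ht₀T : t₀ < T := max_lt hT (by linarith)
  have ht₀ge : T - 1/2 ≤ t₀ := le_max_right _ _
  set x₀ : Fin (k+2) → ℝ := BvFun k b t₀ with hx₀def
  have hpl : IsPicardLindelof (fun _ => vfc k M') (tmin := t₀) (tmax := t₀+2)
      ⟨t₀, le_refl _, by linarith⟩ x₀ ⟨2*C+1, by positivity⟩ 0 ⟨C, hC0⟩ K :=
    { lipschitzOnWith := fun t _ => hlip.lipschitzOnWith
      continuousOn := fun x _ => continuousOn_const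
      norm_le := fun t _ x _ => vfc_bound k M' hM'0 x
      mul_max_le := by
        show C * max (t₀ + 2 - t₀) (t₀ - t₀) ≤ 2*C+1 - ((0:NNReal):ℝ)
        have h1 : t₀ + 2 - t₀ = 2 := by ring
        have h2 : t₀ - t₀ = 0 := by ring
        rw [h1, h2]
        rw [max_eq_left (by norm_num : (0:ℝ) ≤ 2), NNReal.coe_zero]
        linarith }
  obtain ⟨α, hα0, hαd⟩ : ∃ α : ℝ → (Fin (k+2) → ℝ), α t₀ = x₀ ∧ ∀ t ∈ Set.Icc t₀ (t₀+2),
      HasDerivWithinAt α (vfc k M' (α t)) (Set.Icc t₀ (t₀+2)) t :=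
    hpl.exists_eq_forall_mem_Icc_hasDerivWithinAt₀
  have hαIci : ∀ t ∈ Set.Ico t₀ (t₀+2), HasDerivWithinAt α (vfc k M' (α t)) (Set.Ici t) t := by
    intro t ht
    apply (hαd t (Set.Ico_subset_Icc_self ht)).mono_of_mem_nhdsWithin
    rw [mem_nhdsWithin]
    exact ⟨Set.Iio (t₀+2), isOpen_Iio, ht.2,
      fun z hz => ⟨ht.1.trans hz.2, le_of_lt hz.1⟩⟩
  have hαcont : ContinuousOn α (Set.Icc t₀ (t₀+2)) := fun t ht =>
    (hαd t ht).continuousWithinAt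
  have hα1 : ∀ t ∈ Set.Icc t₀ (t₀+2), ∀ j : Fin (k+2), ¬(2 ≤ (j:ℕ) ∧ (j:ℕ) ≤ k) →
      α t j = x₀ j := by
    intro t ht j hj
    have hconst := constant_of_has_deriv_right_zero
      (f := fun t => α t j) (a := t₀) (b := t₀+2)
      ((continuous_apply j).comp_continuousOn hαcont)
      (fun u hu => by
        have h := hasDerivWithinAt_pi.mp (hαIci u hu) j
        have hz : vfc k M' (α u) j = 0 := by simp [vfc, hj]
        rwa [hz] at h)
    rw [show α t j = α t₀ j from hconst t ht, hα0]
  -- Bv solves the clamped ODE on [0,T)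
  have hBvval : ∀ τ ∈ Set.Ico 0 T, ∀ (i : ℕ) (h2 : 2 ≤ i) (hik : i ≤ k) (hm : i < k+2),
      vfc k M' (BvFun k b τ) ⟨i, hm⟩ =
        (b i τ + sig k (i-1)) * (b (i-1) τ - 2 * b i τ + b (i+1) τ) := by
    intro τ hτ i h2 hik hm
    have e1 : BvFun k b τ ⟨i, hm⟩ = b i τ := hBvcomp τ i (by omega) (by omega) hm
    have e0 : BvFun k b τ ⟨i-1, by omega⟩ = b (i-1) τ := hBvcomp τ (i-1) (by omega) (by omega) _
    have e2 : BvFun k b τ ⟨i+1, by omega⟩ = b (i+1) τ := hBvcomp τ (i+1) (by omega) (by omega) _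
    simp only [vfc, Fin.val_mk, dif_pos (⟨h2, hik⟩ : 2 ≤ i ∧ i ≤ k)]
    rw [e1]
    rw [show (⟨i-1, by omega⟩ : Fin (k+2)) = ⟨i-1, by omega⟩ from rfl] at e0
    rw [e0, e2]
    rw [cl_eq_self (hBvabs τ hτ i (by omega) (by omega)),
      cl_eq_self (hBvabs τ hτ (i-1) (by omega) (by omega)),
      cl_eq_self (hBvabs τ hτ (i+1) (by omega) (by omega))]
  have hBvder : ∀ τ ∈ Set.Ico 0 T, HasDerivAt (BvFun k b) (vfc k M' (BvFun k b τ)) τ := by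
    intro τ hτ
    rw [hasDerivAt_pi]
    intro j
    by_cases h : 2 ≤ (j:ℕ) ∧ (j:ℕ) ≤ k
    · have hder := hbd (j:ℕ) h.1 h.2 τ hτ
      have hfun : (fun t => BvFun k b t j) = b (j:ℕ) := by
        funext t; simp only [BvFun, if_pos h]
      rw [hfun]
      have := hBvval τ hτ (j:ℕ) h.1 h.2 j.isLt
      rw [show (⟨(j:ℕ), j.isLt⟩ : Fin (k+2)) = j from Fin.eta j j.isLt] at this
      rw [this]
      exact hder
    · have hfun : (fun t => BvFun k b t j) = fun _ => (0:ℝ) := by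
        funext t; simp only [BvFun, if_neg h]
      rw [hfun]
      have hz : vfc k M' (BvFun k b τ) j = 0 := by simp [vfc, h]
      rw [hz]
      exact hasDerivAt_const τ 0
  -- uniqueness Bv = α on [t₀, T)
  have hEq : ∀ τ, t₀ ≤ τ → τ < T → BvFun k b τ = α τ := by
    intro τ hτ1 hτ2
    have hsub : Set.Icc t₀ τ ⊆ Set.Icc t₀ (t₀+2) :=
      Set.Icc_subset_Icc (le_refl _) (by linarith)
    have := ODE_solution_unique (v := fun _ => vfc k M') (K := K)
      (f := BvFun k b) (g := α) (a := t₀) (b := τ)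
      (fun _ => hlip)
      (fun t ht => (hBvder t ⟨ht₀0.trans ht.1, lt_of_le_of_lt ht.2 hτ2⟩).continuousAt.continuousWithinAt)
      (fun t ht => (hBvder t ⟨ht₀0.trans ht.1, lt_trans ht.2 hτ2⟩).hasDerivWithinAt)
      (hαcont.mono hsub)
      (fun t ht => hαIci t ⟨ht.1, by linarith [ht.2]⟩)
      (by rw [hα0])
    exact this (Set.right_mem_Icc.mpr hτ1)
  -- the extended function
  set b' : ℕ → ℝ → ℝ := fun i t =>
    if h : 2 ≤ i ∧ i ≤ k then (if t < t₀ then b i t else α t ⟨i, by omega⟩) else b i t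
    with hb'def
  have hb'1 : ∀ τ, b' 1 τ = 0 := by
    intro τ; simp only [hb'def, dif_neg (by omega : ¬(2 ≤ 1 ∧ 1 ≤ k))]; exact hb1 τ
  have hb'k : ∀ τ, b' (k+1) τ = 0 := by
    intro τ; simp only [hb'def, dif_neg (by omega : ¬(2 ≤ k+1 ∧ k+1 ≤ k))]; exact hbk1 τ
  have h'eq : ∀ i τ, τ < T → b' i τ = b i τ := by
    intro i τ hτ
    by_cases h : 2 ≤ i ∧ i ≤ k
    · simp only [hb'def, dif_pos h]
      by_cases ht : τ < t₀
      · rw [if_pos ht]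
      · rw [if_neg ht, ← hEq τ (not_lt.mp ht) hτ]
        exact hBvcomp τ i (by omega) (by omega) _
    · simp only [hb'def, dif_neg h]
  -- relation α ↔ b' on [t₀, t₀+2]
  have hαb' : ∀ t, t₀ ≤ t → t ≤ t₀+2 → ∀ (m : ℕ), 1 ≤ m → m ≤ k+1 → ∀ (pf : m < k+2),
      α t ⟨m, pf⟩ = b' m t := by
    intro t ht1 ht2 m h1 h2 pf
    by_cases h : 2 ≤ m ∧ m ≤ k
    · simp only [hb'def, dif_pos h, if_neg (not_lt.mpr ht1)]
    · rw [hα1 t ⟨ht1, ht2⟩ ⟨m, pf⟩ h, hx₀def, hBvcomp t₀ m h1 h2 pf]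
      simp only [hb'def, dif_neg h]
      rcases (by omega : m = 1 ∨ m = k + 1) with h' | h'
      · rw [h', hb1 t₀, hb1 t]
      · rw [h', hbk1 t₀, hbk1 t]
  -- clamped derivative for b' on [0, T+1)
  have hD : ∀ i, 2 ≤ i → i ≤ k → ∀ τ ∈ Set.Ico (0:ℝ) (T+1), HasDerivAt (b' i)
      ((cl M' (b' i τ) + sig k (i-1)) *
        (cl M' (b' (i-1) τ) - 2 * cl M' (b' i τ) + cl M' (b' (i+1) τ))) τ := by
    intro i h2 hik τ hτ
    by_cases hcase : τ < T
    · have hbd' := hbd i h2 hik τ ⟨hτ.1, hcase⟩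
      have hev : b' i =ᶠ[nhds τ] b i := by
        filter_upwards [Iio_mem_nhds hcase] with t ht
        exact h'eq i t ht
      have hval : (cl M' (b' i τ) + sig k (i-1)) *
          (cl M' (b' (i-1) τ) - 2 * cl M' (b' i τ) + cl M' (b' (i+1) τ)) =
          (b i τ + sig k (i-1)) * (b (i-1) τ - 2 * b i τ + b (i+1) τ) := by
        rw [h'eq i τ hcase, h'eq (i-1) τ hcase, h'eq (i+1) τ hcase,
          cl_eq_self (hBvabs τ ⟨hτ.1, hcase⟩ i (by omega) (by omega)),
          cl_eq_self (hBvabs τ ⟨hτ.1, hcase⟩ (i-1) (by omega) (by omega)),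
          cl_eq_self (hBvabs τ ⟨hτ.1, hcase⟩ (i+1) (by omega) (by omega))]
      rw [hval]
      exact hbd'.congr_of_eventuallyEq hev
    · have hTle : T ≤ τ := not_lt.mp hcase
      have h1 : t₀ < τ := lt_of_lt_of_le ht₀T hTle
      have h2' : τ < t₀ + 2 := by linarith [hτ.2, ht₀ge]
      have hαd' : HasDerivAt α (vfc k M' (α τ)) τ :=
        (hαd τ ⟨h1.le, h2'.le⟩).hasDerivAt (Icc_mem_nhds h1 h2')
      have hcomp := hasDerivAt_pi.mp hαd' ⟨i, by omega⟩
      have hev : b' i =ᶠ[nhds τ] (fun t => α t ⟨i, by omega⟩) := by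
        filter_upwards [Ioi_mem_nhds h1] with t ht
        simp only [hb'def, dif_pos (⟨h2, hik⟩ : 2 ≤ i ∧ i ≤ k),
          if_neg (not_lt.mpr (le_of_lt (Set.mem_Ioi.mp ht)))]
      have hval : vfc k M' (α τ) ⟨i, by omega⟩ =
          (cl M' (b' i τ) + sig k (i-1)) *
          (cl M' (b' (i-1) τ) - 2 * cl M' (b' i τ) + cl M' (b' (i+1) τ)) := by
        simp only [vfc, Fin.val_mk, dif_pos (⟨h2, hik⟩ : 2 ≤ i ∧ i ≤ k)]
        rw [hαb' τ h1.le h2'.le i (by omega) (by omega) (by omega),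
          hαb' τ h1.le h2'.le (i-1) (by omega) (by omega) (by omega),
          hαb' τ h1.le h2'.le (i+1) (by omega) (by omega) (by omega)]
      rw [← hval]
      exact hcomp.congr_of_eventuallyEq hev
  -- strip clamps when inside the enlarged box
  have hstrip : ∀ τ : ℝ,
      (∀ m, 1 ≤ m → m ≤ k + 1 → -sig k (m-1) ≤ b' m τ ∧ b' m τ ≤ A + 1) →
      ∀ i, 2 ≤ i → i ≤ k →
      (cl M' (b' i τ) + sig k (i-1)) *
        (cl M' (b' (i-1) τ) - 2 * cl M' (b' i τ) + cl M' (b' (i+1) τ)) =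
      (b' i τ + sig k (i-1)) * (b' (i-1) τ - 2 * b' i τ + b' (i+1) τ) := by
    intro τ hm i h2 hik
    have e1 := hm i (by omega) (by omega)
    have e0 := hm (i-1) (by omega) (by omega)
    have e2 := hm (i+1) (by omega) (by omega)
    rw [cl_eq_self (habs i (by omega) (by omega) _ e1.1 e1.2),
      cl_eq_self (habs (i-1) (by omega) (by omega) _ e0.1 e0.2),
      cl_eq_self (habs (i+1) (by omega) (by omega) _ e2.1 e2.2)]
  -- invariance for b' on [0, T+1)
  have hbox' : ∀ τ ∈ Set.Ico (0:ℝ) (T+1), ∀ i, 2 ≤ i → i ≤ k →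
      b' i τ ∈ Set.Icc (-sig k (i-1) + η) A := by
    apply invariance k hk η A hη₀ hη₁ hA (T+1) b'
      (fun i τ => (cl M' (b' i τ) + sig k (i-1)) *
        (cl M' (b' (i-1) τ) - 2 * cl M' (b' i τ) + cl M' (b' (i+1) τ)))
      hb'1 hb'k hD
    · intro i h2 hik τ _ hm
      exact hstrip τ hm i h2 hik
    · intro i h2 hik
      rw [h'eq i 0 hT]
      exact h0 i h2 hik
  have hboxfull : ∀ τ ∈ Set.Ico (0:ℝ) (T+1), ∀ m, 1 ≤ m → m ≤ k+1 →
      -sig k (m-1) ≤ b' m τ ∧ b' m τ ≤ A + 1 := by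
    intro τ hτ m h1 hm
    by_cases h : 2 ≤ m ∧ m ≤ k
    · obtain ⟨hl, hu⟩ := hbox' τ hτ m h.1 h.2
      exact ⟨by linarith, by linarith⟩
    · have hz : b' m τ = 0 := by
        rcases (by omega : m = 1 ∨ m = k + 1) with h' | h'
        · rw [h']; exact hb'1 τ
        · rw [h']; exact hb'k τ
      rw [hz]
      have h1' : 0 ≤ sig k (m-1) := sig_nonneg (by omega)
      exact ⟨by linarith, by linarith⟩
  refine ⟨T+1, by linarith, b', ⟨hb'1, hb'k, ?_⟩, fun i τ hτ => h'eq i τ hτ.2⟩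
  intro i h2 hik τ hτ
  have h := hD i h2 hik τ hτ
  rwa [hstrip τ (hboxfull τ hτ) i h2 hik] at h

/-- for `η ∈ (0,1/5]` and `A ≥ 0`, the compact
`∏_{i=2}^k [-σᵢ₋₁ + η, A]` is stable under the flow of system (B): any solution on `[0,T)`
starting in it stays in it.  In particular a maximal solution with initial data in this
compact is global: any solution on a finite interval `[0,T)` with initial data in the
compact extends to a solution on a strictly larger interval `[0,T')`. -/
theorem stmt8 (k : ℕ) (hk : 2 ≤ k) (η A : ℝ) (hη₀ : 0 < η) (hη₁ : η ≤ 1 / 5) (hA : 0 ≤ A) :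
    (∀ (T : ℝ) (b : ℕ → ℝ → ℝ), SolvesB k b (Set.Ico 0 T) →
      (∀ i, 2 ≤ i → i ≤ k → b i 0 ∈ Set.Icc (-sig k (i - 1) + η) A) →
      ∀ τ ∈ Set.Ico (0 : ℝ) T, ∀ i, 2 ≤ i → i ≤ k →
        b i τ ∈ Set.Icc (-sig k (i - 1) + η) A) ∧
    (∀ (T : ℝ), 0 < T → ∀ b : ℕ → ℝ → ℝ, SolvesB k b (Set.Ico 0 T) →
      (∀ i, 2 ≤ i → i ≤ k → b i 0 ∈ Set.Icc (-sig k (i - 1) + η) A) →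
      ∃ T' > T, ∃ b' : ℕ → ℝ → ℝ, SolvesB k b' (Set.Ico 0 T') ∧
        ∀ i, ∀ τ ∈ Set.Ico (0 : ℝ) T, b' i τ = b i τ) := by
  constructor
  · intro T b hb hinit
    obtain ⟨hb1, hbk1, hbd⟩ := hb
    exact invariance k hk η A hη₀ hη₁ hA T b
      (fun i τ => (b i τ + sig k (i - 1)) * (b (i - 1) τ - 2 * b i τ + b (i + 1) τ))
      hb1 hbk1 hbd (fun i _ _ τ _ _ => rfl) hinit
  · intro T hT b hb hinit
    exact extend k hk η A hη₀ hη₁ hA T hT b hb hinit
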